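/- For every continuously differentiable function v : ℝ → ℝ such that v and v' are square integrable on ℝ and v(x) → 0 as x → ±∞, one has ∫_ℝ |v(x)|³ dx ≤ ‖v‖_{L²(ℝ)}^{5/2} ‖v'‖_{L²(ℝ)}^{1/2}. -/

import Mathlib

open MeasureTheory Filter

/-- Cubic interpolation estimate: ∫ |v|³ ≤ ‖v‖₂^{5/2} ‖v'‖₂^{1/2}. -/
theorem integral_abs_cube_le
    (v : ℝ → ℝ) (hv : ContDiff ℝ 1 v)
    (hv2 : Integrable (fun x => (v x) ^ 2))
    (hv'2 : Integrable (fun x => (deriv v x) ^ 2))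
    (htop : Tendsto v atTop (nhds 0)) (hbot : Tendsto v atBot (nhds 0)) :
    ∫ x, |v x| ^ 3 ≤
      (Real.sqrt (∫ x, (v x) ^ 2)) ^ ((5 : ℝ) / 2) *
        (Real.sqrt (∫ x, (deriv v x) ^ 2)) ^ ((1 : ℝ) / 2) := by
  have hvc : Continuous v := hv.continuous
  have hv'c : Continuous (deriv v) := hv.continuous_deriv le_rfl
  have hvd : ∀ x : ℝ, HasDerivAt v (deriv v x) x :=
    fun x => (hv.differentiable one_ne_zero x).hasDerivAt
  -- integrability of v * v'
  have hint : Integrable (fun t => v t * deriv v t) := by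
    refine Integrable.mono' ((hv2.add hv'2).div_const 2)
      ((hvc.mul hv'c).aestronglyMeasurable) (Filter.Eventually.of_forall fun t => ?_)
    simp only [Real.norm_eq_abs, abs_mul, Pi.add_apply]
    nlinarith [sq_nonneg (|v t| - |deriv v t|), sq_abs (v t), sq_abs (deriv v t)]
  have hvv' : Integrable (fun t => |v t * deriv v t|) := hint.abs
  set I : ℝ := ∫ t, |v t * deriv v t| with hI
  have hInonneg : 0 ≤ I := integral_nonneg fun t => abs_nonneg _
  -- derivative of v²
  have hsq : ∀ x : ℝ, HasDerivAt (fun t => v t ^ 2) (2 * (v x * deriv v x)) x := by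
    intro x
    have := ((hvd x).mul (hvd x))
    have h2 : HasDerivAt (fun t => v t * v t)
        (deriv v x * v x + v x * deriv v x) x := (hvd x).mul (hvd x)
    convert h2 using 1
    · ext t; ring
    · ring
  have hg : Integrable (fun t => 2 * (v t * deriv v t)) := hint.const_mul 2
  have hsqtop : Tendsto (fun x => v x ^ 2) atTop (nhds 0) := by
    simpa using (htop.mul htop).congr (fun x => (sq (v x)).symm)
  have hsqbot : Tendsto (fun x => v x ^ 2) atBot (nhds 0) := by
    simpa using (hbot.mul hbot).congr (fun x => (sq (v x)).symm)
  -- pointwise bound : v x ^ 2 ≤ I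
  have key : ∀ x : ℝ, v x ^ 2 ≤ I := by
    intro x
    have h1 : ∫ t in Set.Iic x, 2 * (v t * deriv v t) = v x ^ 2 - 0 :=
      integral_Iic_of_hasDerivAt_of_tendsto' (fun t _ => hsq t)
        hg.integrableOn hsqbot
    have h2 : ∫ t in Set.Ioi x, 2 * (v t * deriv v t) = 0 - v x ^ 2 :=
      integral_Ioi_of_hasDerivAt_of_tendsto' (fun t _ => hsq t)
        hg.integrableOn hsqtop
    have hsplit : (∫ t in Set.Iic x, |2 * (v t * deriv v t)|)
        + ∫ t in Set.Ioi x, |2 * (v t * deriv v t)| = ∫ t, |2 * (v t * deriv v t)| :=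
      intervalIntegral.integral_Iic_add_Ioi hg.abs.integrableOn hg.abs.integrableOn
    have habs : (∫ t, |2 * (v t * deriv v t)|) = 2 * I := by
      rw [hI, ← integral_const_mul]
      congr 1; ext t
      rw [abs_mul]; norm_num
    have b1 : ∫ t in Set.Iic x, 2 * (v t * deriv v t)
        ≤ ∫ t in Set.Iic x, |2 * (v t * deriv v t)| :=
      integral_mono hg.integrableOn hg.abs.integrableOn fun t => le_abs_self _
    have b2 : -(∫ t in Set.Ioi x, 2 * (v t * deriv v t))
        ≤ ∫ t in Set.Ioi x, |2 * (v t * deriv v t)| := by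
      rw [← integral_neg]
      exact integral_mono hg.integrableOn.neg hg.abs.integrableOn fun t => neg_le_abs _
    have pos1 : 0 ≤ ∫ t in Set.Iic x, |2 * (v t * deriv v t)| :=
      integral_nonneg fun t => abs_nonneg _
    have pos2 : 0 ≤ ∫ t in Set.Ioi x, |2 * (v t * deriv v t)| :=
      integral_nonneg fun t => abs_nonneg _
    nlinarith [b1, b2, h1, h2, hsplit, habs]
  -- Cauchy–Schwarz : I ≤ sqrt(∫v²) * sqrt(∫v'²)
  set a : ℝ := Real.sqrt (∫ x, (v x) ^ 2) with ha
  set b : ℝ := Real.sqrt (∫ x, (deriv v x) ^ 2) with hb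
  have hanonneg : 0 ≤ a := Real.sqrt_nonneg _
  have hbnonneg : 0 ≤ b := Real.sqrt_nonneg _
  have hCS : I ≤ a * b := by
    have hconj : (2 : ℝ).HolderConjugate 2 := by
      constructor <;> norm_num
    have hmv : MemLp v (ENNReal.ofReal 2) := by
      rw [show ENNReal.ofReal 2 = 2 by simp]
      exact (memLp_two_iff_integrable_sq hvc.aestronglyMeasurable).2 hv2
    have hmv' : MemLp (deriv v) (ENNReal.ofReal 2) := by
      rw [show ENNReal.ofReal 2 = 2 by simp]
      exact (memLp_two_iff_integrable_sq hv'c.aestronglyMeasurable).2 hv'2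
    have h := integral_mul_norm_le_Lp_mul_Lq hconj hmv hmv'
    have e1 : (∫ t, |v t * deriv v t|) = ∫ t, ‖v t‖ * ‖deriv v t‖ := by
      congr 1; ext t; rw [abs_mul]; rfl
    have e2 : (∫ t, ‖v t‖ ^ (2:ℝ)) = ∫ x, (v x) ^ 2 := by
      congr 1; ext t
      rw [Real.norm_eq_abs, Real.rpow_two, sq_abs]
    have e3 : (∫ t, ‖deriv v t‖ ^ (2:ℝ)) = ∫ x, (deriv v x) ^ 2 := by
      congr 1; ext t
      rw [Real.norm_eq_abs, Real.rpow_two, sq_abs]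
    rw [hI, ha, hb, Real.sqrt_eq_rpow, Real.sqrt_eq_rpow, e1, ← e2, ← e3]
    exact h
  -- pointwise bound |v x|³ ≤ sqrt I * v x ^ 2
  have hcube : ∀ x : ℝ, |v x| ^ 3 ≤ Real.sqrt I * v x ^ 2 := by
    intro x
    have h1 : |v x| ≤ Real.sqrt I := by
      rw [show I = Real.sqrt I ^ 2 from (Real.sq_sqrt hInonneg).symm] at key
      exact abs_le_of_sq_le_sq' (by simpa [sq_abs] using key x) (Real.sqrt_nonneg _) |>.2
    calc |v x| ^ 3 = |v x| * |v x| ^ 2 := by ring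
    _ ≤ Real.sqrt I * |v x| ^ 2 := by
        apply mul_le_mul_of_nonneg_right h1 (sq_nonneg _)
    _ = Real.sqrt I * v x ^ 2 := by rw [sq_abs]
  have hmain : ∫ x, |v x| ^ 3 ≤ Real.sqrt I * ∫ x, (v x) ^ 2 := by
    rw [← integral_const_mul]
    exact integral_mono_of_nonneg (Filter.Eventually.of_forall fun x => by positivity)
      (hv2.const_mul _) (Filter.Eventually.of_forall hcube)
  -- put things together
  have hIa : ∫ x, (v x) ^ 2 = a ^ 2 := by
    rw [ha, Real.sq_sqrt (integral_nonneg fun x => sq_nonneg _)]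
  have hfin : Real.sqrt I * ∫ x, (v x) ^ 2 ≤ a ^ ((5:ℝ)/2) * b ^ ((1:ℝ)/2) := by
    rw [hIa]
    have h1 : Real.sqrt I ≤ a ^ ((1:ℝ)/2) * b ^ ((1:ℝ)/2) := by
      calc Real.sqrt I ≤ Real.sqrt (a * b) := Real.sqrt_le_sqrt hCS
      _ = Real.sqrt a * Real.sqrt b := Real.sqrt_mul hanonneg b
      _ = a ^ ((1:ℝ)/2) * b ^ ((1:ℝ)/2) := by
          rw [Real.sqrt_eq_rpow, Real.sqrt_eq_rpow]
    calc Real.sqrt I * a ^ 2 ≤ (a ^ ((1:ℝ)/2) * b ^ ((1:ℝ)/2)) * a ^ 2 :=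
        mul_le_mul_of_nonneg_right h1 (sq_nonneg _)
    _ = (a ^ ((1:ℝ)/2) * a ^ (2:ℝ)) * b ^ ((1:ℝ)/2) := by
        rw [Real.rpow_two]; ring
    _ = a ^ ((5:ℝ)/2) * b ^ ((1:ℝ)/2) := by
        rw [← Real.rpow_add' hanonneg (by norm_num)]; norm_num
  exact le_trans hmain hfin
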